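/- Let A ∈ ℂ^{n×N}, S ⊆ {1,…,N} with δ(S) = ‖A_S*A_S − I‖₂ ≤ δ < 1 and max_{ℓ∉S} ‖A_S* a_ℓ‖₂ ≤ η. Then ‖A_S† a_ℓ‖₂ ≤ η/(1−δ) for all ℓ ∉ S. -/

import Mathlib

open Matrix
open Matrix
open scoped BigOperators Matrix.Norms.L2Operator

/-- The column submatrix `A_S`. -/
noncomputable def colSub {n N : ℕ} (A : Matrix (Fin n) (Fin N) ℂ) (S : Finset (Fin N)) :
    Matrix (Fin n) {j // j ∈ S} ℂ :=
  Matrix.of fun i j => A i j.1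

/-- The pseudo-inverse `A_S† = (A_S* A_S)⁻¹ A_S*`. -/
noncomputable def pinv {n N : ℕ} (A : Matrix (Fin n) (Fin N) ℂ) (S : Finset (Fin N)) :
    Matrix {j // j ∈ S} (Fin n) ℂ :=
  ((colSub A S)ᴴ * colSub A S)⁻¹ * (colSub A S)ᴴ

section aux

variable {k : Type*} [Fintype k] [DecidableEq k]

lemma norm_one_le_aux : ‖(1 : Matrix k k ℂ)‖ ≤ 1 := by
  rw [Matrix.cstar_norm_def, _root_.map_one]
  exact ContinuousLinearMap.norm_id_le

lemma inv_norm_le_aux {G : Matrix k k ℂ} {δ : ℝ} (hδ1 : δ < 1) (hδ : ‖G - 1‖ ≤ δ) :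
    ‖G⁻¹‖ ≤ 1 / (1 - δ) ∧ G * G⁻¹ = 1 := by
  have h1 : ‖(1 : Matrix k k ℂ) - G‖ < 1 := by
    rw [← neg_sub G 1, norm_neg]
    exact lt_of_le_of_lt hδ hδ1
  have hu : IsUnit G := by
    have := isUnit_one_sub_of_norm_lt_one (x := (1 : Matrix k k ℂ) - G) h1
    simpa using this
  have hGi : G * G⁻¹ = 1 := Matrix.mul_nonsing_inv G (Matrix.isUnit_iff_isUnit_det G |>.mp hu)
  refine ⟨?_, hGi⟩
  have key : G⁻¹ = 1 + (1 - G) * G⁻¹ := by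
    rw [sub_mul, one_mul]
    have : G⁻¹ * G = 1 := Matrix.nonsing_inv_mul G (Matrix.isUnit_iff_isUnit_det G |>.mp hu)
    -- G * G⁻¹ = 1
    rw [hGi]; abel
  have hb : ‖G⁻¹‖ ≤ 1 + δ * ‖G⁻¹‖ := by
    calc ‖G⁻¹‖ = ‖1 + (1 - G) * G⁻¹‖ := by rw [← key]
    _ ≤ ‖(1 : Matrix k k ℂ)‖ + ‖(1 - G) * G⁻¹‖ := norm_add_le _ _
    _ ≤ 1 + ‖(1 : Matrix k k ℂ) - G‖ * ‖G⁻¹‖ := by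
        gcongr
        · exact norm_one_le_aux
        · exact norm_mul_le _ _
    _ ≤ 1 + δ * ‖G⁻¹‖ := by
        gcongr
        rw [← neg_sub G 1, norm_neg]; exact hδ
  have hd : 0 < 1 - δ := by linarith
  rw [le_div_iff₀ hd]
  nlinarith [norm_nonneg (G⁻¹)]

end aux

theorem stmt_13 (n N : ℕ) (A : Matrix (Fin n) (Fin N) ℂ) (S : Finset (Fin N))
    (δ η : ℝ) (hδ1 : δ < 1)
    (hδ : ‖(colSub A S)ᴴ * colSub A S - 1‖ ≤ δ)
    (hη : ∀ ℓ ∉ S,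
      Real.sqrt (∑ j : {j // j ∈ S}, ‖(colSub A S)ᴴ.mulVec (fun i => A i ℓ) j‖ ^ 2) ≤ η) :
    ∀ ℓ ∉ S,
      Real.sqrt (∑ j : {j // j ∈ S}, ‖(pinv A S).mulVec (fun i => A i ℓ) j‖ ^ 2) ≤
        η / (1 - δ) := by
  intro ℓ hℓ
  set B := colSub A S
  set G := Bᴴ * B with hG
  obtain ⟨hGinv, -⟩ := inv_norm_le_aux hδ1 hδ
  set a : Fin n → ℂ := fun i => A i ℓ
  set y : EuclideanSpace ℂ {j // j ∈ S} := (EuclideanSpace.equiv _ ℂ).symm (Bᴴ.mulVec a)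
  have hy : ‖y‖ ≤ η := by
    have := hη ℓ hℓ
    rwa [show Real.sqrt (∑ j : {j // j ∈ S}, ‖Bᴴ.mulVec a j‖ ^ 2) = ‖y‖ from
      (EuclideanSpace.norm_eq y).symm] at this
  have hηnn : (0:ℝ) ≤ η := le_trans (Real.sqrt_nonneg _) (hη ℓ hℓ)
  have key : (pinv A S).mulVec a = G⁻¹.mulVec (Bᴴ.mulVec a) := by
    rw [Matrix.mulVec_mulVec]; rfl
  have goal_eq : Real.sqrt (∑ j : {j // j ∈ S}, ‖(pinv A S).mulVec a j‖ ^ 2)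
      = ‖(EuclideanSpace.equiv {j // j ∈ S} ℂ).symm (G⁻¹.mulVec (Bᴴ.mulVec a))‖ := by
    rw [EuclideanSpace.norm_eq, key]; rfl
  rw [goal_eq]
  calc ‖(EuclideanSpace.equiv {j // j ∈ S} ℂ).symm (G⁻¹ *ᵥ Bᴴ.mulVec a)‖
      ≤ ‖G⁻¹‖ * ‖y‖ := Matrix.l2_opNorm_mulVec G⁻¹ y
    _ ≤ (1 / (1 - δ)) * η := by
        have hd : (0:ℝ) < 1 - δ := by linarith
        have h0 : (0:ℝ) ≤ ‖y‖ := norm_nonneg _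
        gcongr
    _ = η / (1 - δ) := by ring
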